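/- Let a : ℤ² → ℂ be the tensor-product linear B-spline filter: a(0,0) = 1/4, a(v) = 1/8 for v ∈ S₂ := {(1,0), (0,1), (−1,0), (0,−1)}, a(v) = 1/16 for v ∈ S₁ := {(1,1), (1,−1), (−1,1), (−1,−1)}, and a(v) = 0 otherwise. Define 36 high-pass filters: (1/8)(δ_γ − δ_{(0,0)}) for each γ ∈ S₁ (4 filters); (√2/8)(δ_γ − δ_{(0,0)}) for each γ ∈ S₂ (4 filters); (√2/16)(δ_{γ₁} − δ_{γ₂}) for each γ₁ ∈ S₁ and γ₂ ∈ S₂ (16 filters); (1/16)(δ_{γ₁} − δ_{γ₂}) for each unordered pair {γ₁,γ₂} of distinct elements of S₁ (6 filters); and (1/8)(δ_{γ₁} − δ_{γ₂}) for each unordered pair {γ₁,γ₂} of distinct elements of S₂ (6 filters). Then {a; b_1, …, b_{36}} is a 2-dimensional tight framelet filter bank. -/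

import Mathlib

open scoped BigOperators

/-- The Dirac filter `δ_γ` on `ℤ²`. -/
noncomputable def dirac2 (γ : Fin 2 → ℤ) : (Fin 2 → ℤ) → ℂ :=
  fun k => if k = γ then 1 else 0

/-- `{a; b_ℓ, ℓ ∈ ι}` is a 2-dimensional dyadic tight framelet filter bank. -/
def IsTFFB2 {ι : Type} [Fintype ι] (a : (Fin 2 → ℤ) → ℂ)
    (b : ι → (Fin 2 → ℤ) → ℂ) : Prop :=
  ∀ γ : Fin 2 → ℤ, (∀ i, γ i = 0 ∨ γ i = 1) → ∀ n : Fin 2 → ℤ,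
    (∑ᶠ k : Fin 2 → ℤ, a (fun i => γ i + 2 * k i) *
        (starRingEnd ℂ) (a (fun i => n i + γ i + 2 * k i))) +
      ∑ ℓ : ι, ∑ᶠ k : Fin 2 → ℤ, b ℓ (fun i => γ i + 2 * k i) *
        (starRingEnd ℂ) (b ℓ (fun i => n i + γ i + 2 * k i)) =
      (1 / 4 : ℂ) * (if n = 0 then 1 else 0)

/-- The four corner support points `S₁` of the tensor-product linear B-spline filter. -/
def eS1 : Fin 4 → (Fin 2 → ℤ) := ![![1, 1], ![1, -1], ![-1, 1], ![-1, -1]]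

/-- The four edge-midpoint support points `S₂` of the tensor-product linear B-spline
filter. -/
def eS2 : Fin 4 → (Fin 2 → ℤ) := ![![1, 0], ![0, 1], ![-1, 0], ![0, -1]]

/-- The tensor-product linear B-spline filter: `1/4` at the origin, `1/8` on `S₂`,
`1/16` on `S₁`, and `0` elsewhere. -/
noncomputable def tpLinearFilter : (Fin 2 → ℤ) → ℂ :=
  fun v =>
    if v = 0 then 1 / 4
    else if ∃ i, v = eS2 i then 1 / 8
    else if ∃ i, v = eS1 i then 1 / 16
    else 0

/-- Index type for the 36 high-pass filters: 4 + 4 + 16 + 6 + 6. -/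
abbrev TPIndex : Type :=
  Fin 4 ⊕ Fin 4 ⊕ (Fin 4 × Fin 4) ⊕ {p : Fin 4 × Fin 4 // p.1 < p.2} ⊕
    {p : Fin 4 × Fin 4 // p.1 < p.2}

/-- The 36 high-pass filters: `(1/8)(δ_γ - δ_0)` for `γ ∈ S₁`; `(√2/8)(δ_γ - δ_0)` for
`γ ∈ S₂`; `(√2/16)(δ_{γ₁} - δ_{γ₂})` for `γ₁ ∈ S₁`, `γ₂ ∈ S₂`; `(1/16)(δ_{γ₁} - δ_{γ₂})`
for unordered pairs of distinct elements of `S₁`; and `(1/8)(δ_{γ₁} - δ_{γ₂})` for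
unordered pairs of distinct elements of `S₂`. -/
noncomputable def tpLinearHighPass : TPIndex → (Fin 2 → ℤ) → ℂ
  | Sum.inl i => fun k => (1 / 8 : ℂ) * (dirac2 (eS1 i) k - dirac2 0 k)
  | Sum.inr (Sum.inl i) => fun k =>
      ((Real.sqrt 2 / 8 : ℝ) : ℂ) * (dirac2 (eS2 i) k - dirac2 0 k)
  | Sum.inr (Sum.inr (Sum.inl p)) => fun k =>
      ((Real.sqrt 2 / 16 : ℝ) : ℂ) * (dirac2 (eS1 p.1) k - dirac2 (eS2 p.2) k)
  | Sum.inr (Sum.inr (Sum.inr (Sum.inl p))) => fun k =>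
      (1 / 16 : ℂ) * (dirac2 (eS1 p.1.1) k - dirac2 (eS1 p.1.2) k)
  | Sum.inr (Sum.inr (Sum.inr (Sum.inr p))) => fun k =>
      (1 / 8 : ℂ) * (dirac2 (eS2 p.1.1) k - dirac2 (eS2 p.1.2) k)

section TPAux

open Function

noncomputable def Dsum (γ n α β : Fin 2 → ℤ) : (Fin 2 → ℤ) → ℂ :=
  fun k => dirac2 α (fun i => γ i + 2 * k i) * dirac2 β (fun i => n i + γ i + 2 * k i)

lemma Dsum_finite (γ n α β : Fin 2 → ℤ) : (support (Dsum γ n α β)).Finite := by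
  apply Set.Finite.subset (Set.finite_singleton (fun i => (α i - γ i) / 2))
  intro k hk
  have h1 : (fun i => γ i + 2 * k i) = α := by
    by_contra h
    simp [Dsum, dirac2, h] at hk
  simp only [Set.mem_singleton_iff]
  funext i
  have := congrFun h1 i
  omega

lemma finsum_Dsum (γ n α β : Fin 2 → ℤ) :
    ∑ᶠ k : Fin 2 → ℤ, Dsum γ n α β k =
      if (∀ i, (α i - γ i) % 2 = 0) ∧ (∀ i, n i = β i - α i) then 1 else 0 := by
  by_cases hpar : ∀ i, (α i - γ i) % 2 = 0
  · set k₀ : Fin 2 → ℤ := fun i => (α i - γ i) / 2 with hk₀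
    have h1 : (fun i => γ i + 2 * k₀ i) = α := by
      funext i; have := hpar i; simp only [hk₀]; omega
    rw [finsum_eq_single _ k₀ ?_]
    · have h2 : ((fun i => n i + γ i + 2 * k₀ i) = β) ↔ (∀ i, n i = β i - α i) := by
        rw [funext_iff]
        apply forall_congr'
        intro i
        have h := congrFun h1 i
        constructor <;> intro hh <;> omega
      simp only [Dsum, dirac2, h1, if_pos rfl, one_mul, h2]
      simp [hpar]
    · intro k hk
      have : (fun i => γ i + 2 * k i) ≠ α := by
        intro h
        apply hk
        funext i
        have := congrFun h i
        have := hpar i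
        simp only [hk₀]
        omega
      simp [Dsum, dirac2, this]
  · rw [if_neg (by tauto)]
    apply finsum_eq_zero_of_forall_eq_zero
    intro k
    have : (fun i => γ i + 2 * k i) ≠ α := by
      intro h
      apply hpar
      intro i
      have := congrFun h i
      omega
    simp [Dsum, dirac2, this]

noncomputable def filt {s : ℕ} (p : Fin s → Fin 2 → ℤ) (c : Fin s → ℂ) : (Fin 2 → ℤ) → ℂ :=
  fun x => ∑ j, c j * dirac2 (p j) x

lemma conj_dirac (α x : Fin 2 → ℤ) : (starRingEnd ℂ) (dirac2 α x) = dirac2 α x := by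
  simp [dirac2, apply_ite]

noncomputable def Ecoef (γ n α β : Fin 2 → ℤ) : ℂ :=
  if (∀ i, (α i - γ i) % 2 = 0) ∧ (∀ i, n i = β i - α i) then 1 else 0

lemma corr_eval {s t : ℕ} (p : Fin s → Fin 2 → ℤ) (c : Fin s → ℂ)
    (q : Fin t → Fin 2 → ℤ) (d : Fin t → ℂ) (γ n : Fin 2 → ℤ) :
    (∑ᶠ k : Fin 2 → ℤ, filt p c (fun i => γ i + 2 * k i) *
        (starRingEnd ℂ) (filt q d (fun i => n i + γ i + 2 * k i))) =
      ∑ j, ∑ j', c j * (starRingEnd ℂ) (d j') * Ecoef γ n (p j) (q j') := by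
  have hfin : ∀ (j : Fin s) (j' : Fin t),
      (support fun k => c j * (starRingEnd ℂ) (d j') * Dsum γ n (p j) (q j') k).Finite := by
    intro j j'
    apply (Dsum_finite γ n (p j) (q j')).subset
    intro k hk
    simp only [mem_support] at hk ⊢
    exact fun h => hk (by rw [h, mul_zero])
  have hpt : ∀ k : Fin 2 → ℤ, filt p c (fun i => γ i + 2 * k i) *
      (starRingEnd ℂ) (filt q d (fun i => n i + γ i + 2 * k i)) =
      ∑ j, ∑ j', c j * (starRingEnd ℂ) (d j') * Dsum γ n (p j) (q j') k := by
    intro k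
    simp only [filt, map_sum, map_mul, conj_dirac, Finset.sum_mul_sum, Dsum]
    exact Finset.sum_congr rfl fun j _ => Finset.sum_congr rfl fun j' _ => by ring
  rw [finsum_congr hpt]
  rw [finsum_sum_comm _ _ (fun j _ => ?_)]
  · refine Finset.sum_congr rfl fun j _ => ?_
    rw [finsum_sum_comm _ _ (fun j' _ => hfin j j')]
    refine Finset.sum_congr rfl fun j' _ => ?_
    rw [← mul_finsum _ _, finsum_Dsum]
    rfl
  · have hsub : (support fun k => ∑ j' : Fin t, c j * (starRingEnd ℂ) (d j') * Dsum γ n (p j) (q j') k) ⊆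
        ⋃ j' : Fin t, support (fun k => c j * (starRingEnd ℂ) (d j') * Dsum γ n (p j) (q j') k) := by
      intro k hk
      simp only [mem_support] at hk
      by_contra hc
      simp only [Set.mem_iUnion, mem_support, not_exists, not_not] at hc
      exact hk (Finset.sum_eq_zero fun j' _ => hc j')
    exact Set.Finite.subset (Set.finite_iUnion fun j' => hfin j j') hsub

def pA : Fin 9 → Fin 2 → ℤ :=
  ![![0,0], ![1,0], ![0,1], ![-1,0], ![0,-1], ![1,1], ![1,-1], ![-1,1], ![-1,-1]]

noncomputable def cA : Fin 9 → ℂ :=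
  ![1/4, 1/8, 1/8, 1/8, 1/8, 1/16, 1/16, 1/16, 1/16]

lemma two_filt (c : ℂ) (α β : Fin 2 → ℤ) :
    (fun k => c * (dirac2 α k - dirac2 β k)) = filt ![α, β] ![c, -c] := by
  funext k
  simp [filt, Fin.sum_univ_two]
  ring

lemma tp_eq : tpLinearFilter = filt pA cA := by
  funext x
  rcases em (∃ j : Fin 9, x = pA j) with ⟨j, rfl⟩ | hx
  · fin_cases j <;>
      norm_num (config := { decide := true })
        [tpLinearFilter, filt, dirac2, pA, cA, eS1, eS2, Fin.sum_univ_succ]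
  · push_neg at hx
    have h0 : x ≠ 0 := by have := hx 0; simpa [pA] using (by intro h; exact this (by rw [h]; decide))
    have h2 : ¬ ∃ i, x = eS2 i := by
      rintro ⟨i, rfl⟩
      fin_cases i
      · exact hx 1 (by decide)
      · exact hx 2 (by decide)
      · exact hx 3 (by decide)
      · exact hx 4 (by decide)
    have h1 : ¬ ∃ i, x = eS1 i := by
      rintro ⟨i, rfl⟩
      fin_cases i
      · exact hx 5 (by decide)
      · exact hx 6 (by decide)
      · exact hx 7 (by decide)
      · exact hx 8 (by decide)
    have hd : ∀ j : Fin 9, dirac2 (pA j) x = 0 := by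
      intro j
      simp [dirac2, hx j]
    simp [tpLinearFilter, filt, h0, h1, h2, hd]

lemma hsub (g : Fin 4 × Fin 4 → ℂ) :
    (∑ p : {p : Fin 4 × Fin 4 // p.1 < p.2}, g p.val) =
      g (0,1) + g (0,2) + g (0,3) + g (1,2) + g (1,3) + g (2,3) := by
  rw [← Finset.sum_subtype ({(0,1),(0,2),(0,3),(1,2),(1,3),(2,3)} : Finset (Fin 4 × Fin 4)) (by decide) g]
  rw [Finset.sum_insert (by decide), Finset.sum_insert (by decide), Finset.sum_insert (by decide),
    Finset.sum_insert (by decide), Finset.sum_insert (by decide), Finset.sum_singleton]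
  ring

lemma hsub' (g : {p : Fin 4 × Fin 4 // p.1 < p.2} → ℂ) :
    (∑ p, g p) = g ⟨(0,1), by decide⟩ + g ⟨(0,2), by decide⟩ + g ⟨(0,3), by decide⟩ +
      g ⟨(1,2), by decide⟩ + g ⟨(1,3), by decide⟩ + g ⟨(2,3), by decide⟩ := by
  have h : ∀ p : {p : Fin 4 × Fin 4 // p.1 < p.2},
      g p = (fun x : Fin 4 × Fin 4 => if h : x.1 < x.2 then g ⟨x, h⟩ else 0) p.val := by
    intro p
    simp only [Subtype.coe_eta, dif_pos p.2]
  rw [Finset.sum_congr rfl fun p _ => h p,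
    hsub (fun x : Fin 4 × Fin 4 => if h : x.1 < x.2 then g ⟨x, h⟩ else 0)]
  simp (config := { decide := true })

lemma corr_two (c : ℂ) (α β γ n : Fin 2 → ℤ) :
    (∑ᶠ k : Fin 2 → ℤ, (c * (dirac2 α (fun i => γ i + 2 * k i) - dirac2 β (fun i => γ i + 2 * k i))) *
        (starRingEnd ℂ) (c * (dirac2 α (fun i => n i + γ i + 2 * k i) -
          dirac2 β (fun i => n i + γ i + 2 * k i)))) =
      c * (starRingEnd ℂ) c *
        (Ecoef γ n α α - Ecoef γ n α β - Ecoef γ n β α + Ecoef γ n β β) := by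
  have h2 : ∀ x : Fin 2 → ℤ, c * (dirac2 α x - dirac2 β x) = filt ![α, β] ![c, -c] x :=
    fun x => congrFun (two_filt c α β) x
  simp only [h2]
  rw [corr_eval]
  simp only [Fin.sum_univ_two, Matrix.cons_val_zero, Matrix.cons_val_one, Matrix.head_cons, map_neg]
  ring

lemma c8 : (1/8 : ℂ) * (starRingEnd ℂ) (1/8 : ℂ) = 1/64 := by
  rw [show ((1/8 : ℂ)) = ((1/8 : ℝ) : ℂ) by norm_num, Complex.conj_ofReal]
  norm_num

lemma c16 : (1/16 : ℂ) * (starRingEnd ℂ) (1/16 : ℂ) = 1/256 := by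
  rw [show ((1/16 : ℂ)) = ((1/16 : ℝ) : ℂ) by norm_num, Complex.conj_ofReal]
  norm_num

lemma s28 : ((Real.sqrt 2 / 8 : ℝ) : ℂ) * (starRingEnd ℂ) ((Real.sqrt 2 / 8 : ℝ) : ℂ) = 1/32 := by
  have h : Real.sqrt 2 * Real.sqrt 2 = 2 := Real.mul_self_sqrt (by norm_num)
  rw [Complex.conj_ofReal, ← Complex.ofReal_mul, div_mul_div_comm, h]
  norm_num

lemma s216 : ((Real.sqrt 2 / 16 : ℝ) : ℂ) * (starRingEnd ℂ) ((Real.sqrt 2 / 16 : ℝ) : ℂ) = 1/128 := by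
  have h : Real.sqrt 2 * Real.sqrt 2 = 2 := Real.mul_self_sqrt (by norm_num)
  rw [Complex.conj_ofReal, ← Complex.ofReal_mul, div_mul_div_comm, h]
  norm_num


end TPAux

set_option maxHeartbeats 4000000 in
/-- The tensor-product linear B-spline filter together with the 36 two-coefficient
high-pass filters forms a 2-dimensional tight framelet filter bank. -/
theorem tpLinear_tffb :
    Fintype.card TPIndex = 36 ∧ IsTFFB2 tpLinearFilter tpLinearHighPass := by
  refine ⟨by decide, ?_⟩
  intro γ hγ n
  have hn0 : (n = 0) ↔ (n 0 = 0 ∧ n 1 = 0) := by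
    rw [funext_iff, Fin.forall_fin_two]
    simp
  rw [tp_eq, corr_eval]
  simp only [Fintype.sum_sum_type, tpLinearHighPass]
  simp only [corr_two]
  rw [hsub', hsub']
  rcases hγ 0 with h0 | h0 <;> rcases hγ 1 with h1 | h1 <;>
  · simp only [Fintype.sum_prod_type, Fin.sum_univ_four, Fin.sum_univ_succ, Fin.sum_univ_zero,
      c8, c16, s28, s216, Ecoef, Fin.forall_fin_two, h0, h1, pA, cA, eS1, eS2,
      Matrix.cons_val_zero, Matrix.cons_val_one, Matrix.head_cons, Matrix.cons_val_succ,
      Matrix.tail_cons, Matrix.vecHead, Matrix.vecTail, Function.comp, map_div₀, map_one, map_ofNat]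
    norm_num [hn0, Matrix.vecHead, Matrix.vecTail, Function.comp]
    have hx : n 0 = -2 ∨ n 0 = -1 ∨ n 0 = 0 ∨ n 0 = 1 ∨ n 0 = 2 ∨
        (n 0 ≠ -2 ∧ n 0 ≠ -1 ∧ n 0 ≠ 0 ∧ n 0 ≠ 1 ∧ n 0 ≠ 2) := by omega
    have hy : n 1 = -2 ∨ n 1 = -1 ∨ n 1 = 0 ∨ n 1 = 1 ∨ n 1 = 2 ∨
        (n 1 ≠ -2 ∧ n 1 ≠ -1 ∧ n 1 ≠ 0 ∧ n 1 ≠ 1 ∧ n 1 ≠ 2) := by omega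
    rcases hx with hx|hx|hx|hx|hx|hx <;> rcases hy with hy|hy|hy|hy|hy|hy <;>
      · simp (config := { decide := true }) only [hx, hy]
        norm_num [Matrix.cons_val_two, Matrix.cons_val_three, hx, hy]
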